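/- Let A be a finite abelian group. A 2-cocycle f ∈ Z²(A, ℂˣ) (trivial action) is a 2-coboundary if and only if f is symmetric, i.e. f(x,y) = f(y,x) for all x,y ∈ A. -/

import Mathlib

/-!
Statement 11: a 2-cocycle on a finite abelian group with coefficients in `ℂˣ`
(trivial action) is a coboundary if and only if it is symmetric.
-/

namespace Zesting

noncomputable instance : RootableBy ℂˣ ℕ :=
  rootableByOfPowLeftSurj _ _ fun {n} hn u => by
    obtain ⟨z, hz⟩ := IsAlgClosed.exists_pow_nat_eq (u : ℂ) (Nat.pos_of_ne_zero hn)
    have hz0 : z ≠ 0 := by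
      rintro rfl
      rw [zero_pow hn] at hz
      exact u.ne_zero hz.symm
    exact ⟨Units.mk0 z hz0, Units.ext (by simpa using hz)⟩

noncomputable instance : RootableBy ℂˣ ℤ := Group.rootableByIntOfRootableByNat ℂˣ

noncomputable instance : DivisibleBy (Additive ℂˣ) ℤ where
  div a n := Additive.ofMul (RootableBy.root a.toMul n)
  div_zero a := congrArg Additive.ofMul (RootableBy.root_zero _)
  div_cancel a hn := by
    apply Additive.toMul.injective
    rw [toMul_zsmul]
    exact RootableBy.root_cancel _ hn

/-- Rearrangement lemma for the cocycle condition in a commutative group. -/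
lemma cocycle_rearrange {G : Type*} [CommGroup G] {p q r s : G}
    (h : p * q⁻¹ * r * s⁻¹ = 1) : p * r = q * s := by
  rw [mul_inv_eq_one] at h
  have h2 : p * r = (p * q⁻¹ * r) * q := by
    rw [mul_right_comm (p * q⁻¹) r q, inv_mul_cancel_right]
  rw [h2, h, mul_comm]

/-- Auxiliary type: the central extension of `A` by `ℂˣ` determined by `f`. -/
def Ext (A : Type*) (_f : A → A → ℂˣ) : Type _ := A × ℂˣ

lemma aux_assoc {G : Type*} [CommGroup G] (s t u B C Q R : G) (h : B * C = Q * R) :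
    s * t * R * u * Q = s * (t * u * B) * C := by
  calc s * t * R * u * Q = s * t * u * (Q * R) := by ac_rfl
    _ = s * t * u * (B * C) := by rw [h]
    _ = s * (t * u * B) * C := by ac_rfl

/-- Key lemma: a normalized symmetric 2-cocycle with values in `ℂˣ` is a coboundary. -/
lemma key {A : Type*} [CommGroup A] (f : A → A → ℂˣ)
    (hcoc : ∀ x y z, f y z * (f (x * y) z)⁻¹ * f x (y * z) * (f x y)⁻¹ = 1)
    (hsym : ∀ x y, f x y = f y x)
    (h1 : ∀ x, f 1 x = 1) (h1' : ∀ x, f x 1 = 1) :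
    ∃ κ : A → ℂˣ, ∀ x y, f x y = κ y * (κ (x * y))⁻¹ * κ x := by
  have hassoc : ∀ a b c : A, f b c * f a (b * c) = f (a * b) c * f a b :=
    fun a b c => cocycle_rearrange (hcoc a b c)
  -- the extension group structure
  letI : CommGroup (Ext A f) :=
  { mul := fun p q => (p.1 * q.1, p.2 * q.2 * f p.1 q.1)
    one := ((1 : A), (1 : ℂˣ))
    inv := fun p => (p.1⁻¹, p.2⁻¹ * (f p.1⁻¹ p.1)⁻¹)
    mul_assoc := by
      rintro ⟨a, s⟩ ⟨b, t⟩ ⟨c, u⟩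
      refine Prod.ext (mul_assoc a b c) ?_
      exact aux_assoc s t u _ _ _ _ (hassoc a b c)
    one_mul := by
      rintro ⟨a, s⟩
      refine Prod.ext (one_mul a) ?_
      show 1 * s * f 1 a = s
      rw [h1, one_mul, mul_one]
    mul_one := by
      rintro ⟨a, s⟩
      refine Prod.ext (mul_one a) ?_
      show s * 1 * f a 1 = s
      rw [h1', mul_one, mul_one]
    inv_mul_cancel := by
      rintro ⟨a, s⟩
      refine Prod.ext (inv_mul_cancel a) ?_
      show s⁻¹ * (f a⁻¹ a)⁻¹ * s * f a⁻¹ a = 1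
      calc s⁻¹ * (f a⁻¹ a)⁻¹ * s * f a⁻¹ a
          = (s⁻¹ * s) * ((f a⁻¹ a)⁻¹ * f a⁻¹ a) := by ac_rfl
        _ = 1 := by rw [inv_mul_cancel, inv_mul_cancel, mul_one]
    mul_comm := by
      rintro ⟨a, s⟩ ⟨b, t⟩
      refine Prod.ext (mul_comm a b) ?_
      show s * t * f a b = t * s * f b a
      rw [hsym a b]; ac_rfl }
  -- the inclusion of ℂˣ
  let i : ℂˣ →* Ext A f :=
  { toFun := fun s => ((1 : A), s)
    map_one' := rfl
    map_mul' := fun s t => by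
      refine Prod.ext (one_mul 1).symm ?_
      show s * t = s * t * f 1 1
      rw [h1, mul_one] }
  have hinj : Function.Injective i := by
    intro s t h
    exact congrArg (fun p : Ext A f => p.2) h
  -- extend the identity map along i, using divisibility of ℂˣ
  obtain ⟨r, hr⟩ := (Module.Baer.of_divisible (Additive ℂˣ)).extension_property_addMonoidHom
    (MonoidHom.toAdditive i) hinj (AddMonoidHom.id (Additive ℂˣ))
  have hri : ∀ s : ℂˣ, (r (Additive.ofMul (i s))).toMul = s := by
    intro s
    exact congrArg Additive.toMul (DFunLike.congr_fun hr (Additive.ofMul s))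
  have hrmul : ∀ e₁ e₂ : Ext A f,
      (r (Additive.ofMul (e₁ * e₂))).toMul
        = (r (Additive.ofMul e₁)).toMul * (r (Additive.ofMul e₂)).toMul := by
    intro e₁ e₂
    have : Additive.ofMul (e₁ * e₂) = Additive.ofMul e₁ + Additive.ofMul e₂ := rfl
    rw [this, map_add]
    rfl
  let e : A → Ext A f := fun a => (a, (1 : ℂˣ))
  refine ⟨fun a => (r (Additive.ofMul (e a))).toMul, ?_⟩
  intro x y
  have hmulE : e x * e y = e (x * y) * i (f x y) := by
    refine Prod.ext ?_ ?_
    · exact (mul_one (x * y)).symm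
    · show (1 : ℂˣ) * 1 * f x y = 1 * f x y * f (x * y) 1
      rw [h1', one_mul, one_mul, mul_one]
  have h := congrArg (fun e : Ext A f => (r (Additive.ofMul e)).toMul) hmulE
  rw [hrmul, hrmul, hri] at h
  set κ := fun a => (r (Additive.ofMul (e a))).toMul with hκ
  -- h : κ x * κ y = κ (x*y) * f x y
  have : f x y = (κ (x * y))⁻¹ * (κ x * κ y) := by
    rw [h, inv_mul_cancel_left]
  rw [this]; ac_rfl

theorem statement11 {A : Type*} [CommGroup A] [Finite A] (f : A → A → ℂˣ)
    (hf : ∀ x y z, f y z * (f (x * y) z)⁻¹ * f x (y * z) * (f x y)⁻¹ = 1) :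
    (∃ κ : A → ℂˣ, ∀ x y, f x y = κ y * (κ (x * y))⁻¹ * κ x) ↔
      (∀ x y, f x y = f y x) := by
  constructor
  · rintro ⟨κ, hκ⟩ x y
    rw [hκ, hκ, mul_comm x y]
    ac_rfl
  · intro hsym
    set c := f 1 1 with hc
    have hf1x : ∀ x, f 1 x = c := by
      intro x
      have h := hf 1 1 x
      rw [one_mul, one_mul] at h
      -- h : f 1 x * (f 1 x)⁻¹ * f 1 x * (f 1 1)⁻¹ = 1
      rw [mul_inv_cancel, one_mul, mul_inv_eq_one] at h
      exact h
    have hfx1 : ∀ x, f x 1 = c := by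
      intro x
      have h := hf x 1 1
      rw [mul_one, mul_one] at h
      -- h : f 1 1 * (f x 1)⁻¹ * f x 1 * (f x 1)⁻¹ = 1
      rw [inv_mul_cancel_right, mul_inv_eq_one] at h
      exact h.symm
    set g := fun x y => f x y * c⁻¹ with hg
    have hgcoc : ∀ x y z, g y z * (g (x * y) z)⁻¹ * g x (y * z) * (g x y)⁻¹ = 1 := by
      intro x y z
      have h := hf x y z
      show f y z * c⁻¹ * (f (x * y) z * c⁻¹)⁻¹ * (f x (y * z) * c⁻¹) * (f x y * c⁻¹)⁻¹ = 1
      simp only [mul_inv_rev, inv_inv]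
      calc f y z * c⁻¹ * (c * (f (x * y) z)⁻¹) * (f x (y * z) * c⁻¹) * (c * (f x y)⁻¹)
          = (f y z * (f (x * y) z)⁻¹ * f x (y * z) * (f x y)⁻¹) * (c⁻¹ * c) * (c⁻¹ * c) := by
            ac_rfl
        _ = 1 := by rw [h, inv_mul_cancel, mul_one, mul_one]
    have hgsym : ∀ x y, g x y = g y x := fun x y => by
      show f x y * c⁻¹ = f y x * c⁻¹
      rw [hsym]
    have hg1 : ∀ x, g 1 x = 1 := fun x => by
      show f 1 x * c⁻¹ = 1
      rw [hf1x, mul_inv_cancel]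
    have hg1' : ∀ x, g x 1 = 1 := fun x => by
      show f x 1 * c⁻¹ = 1
      rw [hfx1, mul_inv_cancel]
    obtain ⟨κ₀, hκ₀⟩ := key g hgcoc hgsym hg1 hg1'
    refine ⟨fun a => κ₀ a * c, ?_⟩
    intro x y
    have h := hκ₀ x y
    show f x y = κ₀ y * c * (κ₀ (x * y) * c)⁻¹ * (κ₀ x * c)
    simp only [mul_inv_rev]
    calc f x y = f x y * c⁻¹ * c := by rw [inv_mul_cancel_right]
      _ = (κ₀ y * (κ₀ (x * y))⁻¹ * κ₀ x) * c := by rw [← h]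
      _ = κ₀ y * c * (c⁻¹ * (κ₀ (x * y))⁻¹) * (κ₀ x * c) := by
          calc (κ₀ y * (κ₀ (x * y))⁻¹ * κ₀ x) * c
              = (κ₀ y * (κ₀ (x * y))⁻¹ * κ₀ x) * c * (c⁻¹ * c) := by
                rw [inv_mul_cancel, mul_one]
            _ = κ₀ y * c * (c⁻¹ * (κ₀ (x * y))⁻¹) * (κ₀ x * c) := by ac_rfl

end Zesting
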